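/- Define B₀ = 01 over the alphabet {0,1,2,3} and B_{n+1} = B_n · 23 · B_n^R. Then for every n ≥ 0, every palindromic factor of B_n lies in {ε, 0, 1, 2, 3}; that is, B_n contains no palindromic factor of length ≥ 2. -/

import Mathlib

def IsFactor {α : Type*} (y x : List α) : Prop := ∃ u v, x = u ++ y ++ v

def IsPal {α : Type*} (y : List α) : Prop := y.reverse = y

/-- `B 0 = 01`, `B (n+1) = B n ++ 23 ++ (B n)^R` over the alphabet `{0,1,2,3}`. -/
def B : ℕ → List (Fin 4)
  | 0 => [0, 1]
  | n + 1 => B n ++ [2, 3] ++ (B n).reverse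

lemma B_len (n : ℕ) : 2 ≤ (B n).length := by
  induction n with
  | zero => simp [B]
  | succ n ih => simp only [B, List.length_append, List.length_reverse]; omega

lemma B_start (n : ℕ) : (B n)[0]? = some 0 ∧ (B n)[1]? = some 1 := by
  induction n with
  | zero => simp [B]
  | succ n ih =>
    have h := B_len n
    have e : B (n + 1) = (B n ++ [2, 3]) ++ (B n).reverse := rfl
    refine ⟨?_, ?_⟩
    · rw [e, List.getElem?_append_left
        (by simp only [List.length_append]; omega),
        List.getElem?_append_left (by omega)]
      exact ih.1
    · rw [e, List.getElem?_append_left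
        (by simp only [List.length_append]; omega),
        List.getElem?_append_left (by omega)]
      exact ih.2

/-- All letters in the last two positions of `B n` are `0` or `1`. -/
lemma B_end (n : ℕ) : ∀ i a, (B n).length ≤ i + 2 → (B n)[i]? = some a →
    a = 0 ∨ a = 1 := by
  induction n with
  | zero =>
    intro i a _ h
    match i with
    | 0 => left; simpa [B] using h.symm
    | 1 => right; simpa [B] using h.symm
    | (k+2) => simp [B] at h
  | succ n _ =>
    intro i a hlen h
    have hm := B_len n
    have hL : (B (n+1)).length = 2 * (B n).length + 2 := by
      simp only [B, List.length_append, List.length_reverse, List.length_cons,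
        List.length_nil]
      omega
    rw [hL] at hlen
    by_cases hi : i < 2 * (B n).length + 2
    · have e : B (n + 1) = (B n ++ [2, 3]) ++ (B n).reverse := rfl
      rw [e, List.getElem?_append_right
          (by simp only [List.length_append, List.length_cons, List.length_nil]; omega),
        List.getElem?_reverse
          (by simp only [List.length_append, List.length_cons, List.length_nil,
            List.length_reverse]; omega)] at h
      rcases B_start n with ⟨h0, h1⟩
      have hidx : (B n).length - 1 - (i - (B n ++ [2, 3]).length) = 0 ∨
          (B n).length - 1 - (i - (B n ++ [2, 3]).length) = 1 := by
        simp only [List.length_append, List.length_cons, List.length_nil]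
        omega
      rcases hidx with hk | hk <;> rw [hk] at h
      · rw [h0] at h; left; exact (Option.some_inj.mp h).symm
      · rw [h1] at h; right; exact (Option.some_inj.mp h).symm
    · rw [List.getElem?_eq_none (by rw [hL]; omega)] at h
      simp at h

/-- No square factor `aa` and no palindrome `aba`, stated by index positions. -/
lemma B_key (n : ℕ) : ∀ i a, (B n)[i]? = some a →
    (B n)[i+1]? ≠ some a ∧ (B n)[i+2]? ≠ some a := by
  induction n with
  | zero =>
    intro i a h
    match i with
    | 0 =>
      have ha : a = 0 := by simpa [B] using h.symm
      subst ha
      exact ⟨by simp [B], by simp [B]⟩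
    | 1 => exact ⟨by simp [B], by simp [B]⟩
    | (k+2) => simp [B] at h
  | succ n ih =>
    have hm := B_len n
    set m := (B n).length with hm'
    have hget : ∀ j, (B (n+1))[j]? =
        if j < m then (B n)[j]?
        else if j = m then some 2
        else if j = m + 1 then some 3
        else if j < 2 * m + 2 then (B n)[2*m+1-j]?
        else none := by
      intro j
      show ((B n ++ [2,3]) ++ (B n).reverse)[j]? = _
      split_ifs with h1 h2 h3 h4
      · rw [List.getElem?_append_left
          (by simp only [List.length_append, List.length_cons, List.length_nil]; omega),
          List.getElem?_append_left (by omega)]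
      · subst h2
        rw [List.getElem?_append_left
          (by simp only [List.length_append, List.length_cons, List.length_nil]; omega),
          List.getElem?_append_right (by omega)]
        simp [hm']
      · subst h3
        rw [List.getElem?_append_left
          (by simp only [List.length_append, List.length_cons, List.length_nil]; omega),
          List.getElem?_append_right (by omega)]
        have hx : m + 1 - m = 1 := by omega
        rw [hx]
        rfl
      · rw [List.getElem?_append_right
          (by simp only [List.length_append, List.length_cons, List.length_nil]; omega),
          List.getElem?_reverse
            (by simp only [List.length_append, List.length_cons, List.length_nil,
              List.length_reverse]; omega)]
        have hx : (B n).length - 1 - (j - (B n ++ [2, 3]).length) = 2*m+1-j := by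
          simp only [List.length_append, List.length_cons, List.length_nil]
          omega
        rw [hx]
      · rw [List.getElem?_eq_none
          (by simp only [List.length_append, List.length_cons, List.length_nil,
            List.length_reverse]; omega)]
    intro i a hi
    rw [hget] at hi
    have key : ∀ d, d = 1 ∨ d = 2 → (B (n+1))[i+d]? ≠ some a := by
      intro d hd
      have hd2 : 1 ≤ d ∧ d ≤ 2 := by omega
      rw [hget]
      by_cases c1 : i < m
      · rw [if_pos c1] at hi
        by_cases c2 : i + d < m
        · rw [if_pos c2]
          rcases hd with rfl | rfl
          · exact (ih i a hi).1
          · exact (ih i a hi).2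
        · by_cases c3 : i + d = m
          · rw [if_neg (by omega), if_pos c3]
            rcases B_end n i a (by omega) hi with rfl | rfl <;> simp
          · have c4 : i + d = m + 1 := by omega
            rw [if_neg (by omega), if_neg (by omega), if_pos c4]
            rcases B_end n i a (by omega) hi with rfl | rfl <;> simp
      · by_cases c2 : i = m
        · rw [if_neg c1, if_pos c2] at hi
          have ha : a = 2 := (Option.some_inj.mp hi).symm
          subst ha
          rcases hd with rfl | rfl
          · rw [if_neg (by omega), if_neg (by omega), if_pos (by omega)]
            simp
          · rw [if_neg (by omega), if_neg (by omega), if_neg (by omega),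
              if_pos (by omega)]
            intro hc
            rcases B_end n _ _ (by omega) hc with h | h <;> simp at h
        · by_cases c3 : i = m + 1
          · rw [if_neg c1, if_neg c2, if_pos c3] at hi
            have ha : a = 3 := (Option.some_inj.mp hi).symm
            subst ha
            rw [if_neg (by omega), if_neg (by omega), if_neg (by omega),
              if_pos (by omega)]
            intro hc
            rcases B_end n _ _ (by omega) hc with h | h <;> simp at h
          · by_cases c4 : i < 2 * m + 2
            · rw [if_neg c1, if_neg c2, if_neg c3, if_pos c4] at hi
              by_cases c5 : i + d < 2 * m + 2
              · rw [if_neg (by omega), if_neg (by omega), if_neg (by omega),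
                  if_pos c5]
                intro hc
                have hk : 2*m+1-i = (2*m+1-(i+d)) + d := by omega
                rw [hk] at hi
                rcases hd with rfl | rfl
                · exact (ih _ a hc).1 hi
                · exact (ih _ a hc).2 hi
              · rw [if_neg (by omega), if_neg (by omega), if_neg (by omega),
                  if_neg c5]
                simp
            · rw [if_neg c1, if_neg c2, if_neg c3, if_neg c4] at hi
              simp at hi
    exact ⟨key 1 (Or.inl rfl), key 2 (Or.inr rfl)⟩

lemma factor_trans {α : Type*} {y z x : List α} (h1 : IsFactor y z) (h2 : IsFactor z x) :
    IsFactor y x := by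
  obtain ⟨u1, v1, rfl⟩ := h1
  obtain ⟨u2, v2, rfl⟩ := h2
  exact ⟨u2 ++ u1, v1 ++ v2, by simp⟩

lemma pal_structure {α : Type*} (u : List α) (hp : u.reverse = u) (hl : 2 ≤ u.length) :
    (∃ a, IsFactor [a, a] u) ∨ ∃ a b, IsFactor [a, b, a] u := by
  replace hp := List.Palindrome.of_reverse_eq hp
  induction hp with
  | nil => simp at hl
  | singleton => simp at hl
  | @cons_concat x l hpl ih =>
    match l with
    | [] => exact Or.inl ⟨x, [], [], by simp⟩
    | [b] => exact Or.inr ⟨x, b, [], [], by simp⟩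
    | b :: c :: l' =>
      have h2 := ih (by simp only [List.length_cons]; omega)
      have lift : ∀ y : List α, IsFactor y (b :: c :: l') →
          IsFactor y (x :: ((b :: c :: l') ++ [x])) := by
        rintro y ⟨u', v', he⟩
        exact ⟨x :: u', v' ++ [x], by simp [he]⟩
      rcases h2 with ⟨a, hf⟩ | ⟨a, b', hf⟩
      · exact Or.inl ⟨a, lift _ hf⟩
      · exact Or.inr ⟨a, b', lift _ hf⟩

lemma factor_getElem {α : Type*} {y x u v : List α} (he : x = u ++ y ++ v)
    {j : ℕ} (hj : j < y.length) : x[u.length + j]? = y[j]? := by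
  subst he
  rw [List.append_assoc, List.getElem?_append_right (Nat.le_add_right _ _),
    Nat.add_sub_cancel_left, List.getElem?_append_left hj]

/-- Every palindromic factor of `B n` lies in `{ε, 0, 1, 2, 3}`; i.e., `B n` has no
palindromic factor of length ≥ 2. -/
theorem B_palindromic_factors (n : ℕ) :
    ∀ u : List (Fin 4), IsFactor u (B n) → IsPal u →
      u ∈ ({[], [0], [1], [2], [3]} : Set (List (Fin 4))) := by
  intro u hf hp
  match u with
  | [] => simp
  | [a] => fin_cases a <;> (first | rfl | simp)
  | a :: b :: u' =>
    exfalso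
    rcases pal_structure _ hp (by simp only [List.length_cons]; omega) with ⟨c, hc⟩ | ⟨c, d, hc⟩
    · obtain ⟨u1, v1, he⟩ := factor_trans hc hf
      have h0 := factor_getElem he (show 0 < ([c,c] : List (Fin 4)).length by simp)
      have h1 := factor_getElem he (show 1 < ([c,c] : List (Fin 4)).length by simp)
      simp only [List.getElem?_cons_zero, List.getElem?_cons_succ, Nat.add_zero] at h0 h1
      exact (B_key n u1.length c h0).1 h1
    · obtain ⟨u1, v1, he⟩ := factor_trans hc hf
      have h0 := factor_getElem he (show 0 < ([c,d,c] : List (Fin 4)).length by simp)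
      have h2 := factor_getElem he (show 2 < ([c,d,c] : List (Fin 4)).length by simp)
      simp only [List.getElem?_cons_zero, List.getElem?_cons_succ, Nat.add_zero] at h0 h2
      exact (B_key n u1.length c h0).2 h2
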